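/- Let g : [0, ∞) → ℝ be Lebesgue integrable with ‖g‖₁ = ∫₀^∞ |g(s)| ds. Let t₁ = τ₁ < τ₂ < ⋯ < τ_M = t_k be real numbers, and let r : ℝ → ℝ be continuous on [t₁, t_k] and differentiable at every point of [t₁, t_k] with |r′(t)| ≤ L for all t ∈ [t₁, t_k]. Define Δr : ℝ → ℝ by Δr(t) = r(t) − r(τ_l) for t ∈ [τ_l, τ_{l+1}) with l = 1, …, M−1, and Δr(t) = 0 for t < t₁ and for t ≥ t_k. Then | ∫₀^∞ g(s) Δr(t_k − s) ds | ≤ ‖g‖₁ · ( max_{1 ≤ l ≤ M−1} (τ_{l+1} − τ_l) ) · L. -/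

import Mathlib

open MeasureTheory

/-- **Bound on the output of a causal stable filter driven by the ZOH interpolation error.**
Let `g` be integrable on `[0,∞)`, let `τ 0 < ⋯ < τ M` be sampling instants, and let `r`
be continuous and differentiable on `[τ 0, τ M]` with `|r'| ≤ L` there. If `Δr` is the
ZOH interpolation error of `r` (and `0` outside `[τ 0, τ M)`), then
`|∫₀^∞ g(s) Δr(t_k − s) ds| ≤ ‖g‖₁ · (max_l (τ (l+1) − τ l)) · L`, where `t_k = τ M`. -/
theorem filtered_zoh_error_bound {M : ℕ} (hM : 0 < M)
    (g : ℝ → ℝ) (hg : IntegrableOn g (Set.Ici (0 : ℝ)))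
    (τ : Fin (M + 1) → ℝ) (hτ : StrictMono τ)
    (r r' : ℝ → ℝ) (L : ℝ)
    (hcont : ContinuousOn r (Set.Icc (τ 0) (τ (Fin.last M))))
    (hderiv : ∀ t ∈ Set.Icc (τ 0) (τ (Fin.last M)), HasDerivAt r (r' t) t)
    (hL : ∀ t ∈ Set.Icc (τ 0) (τ (Fin.last M)), |r' t| ≤ L)
    (Δr : ℝ → ℝ)
    (hΔ : ∀ l : Fin M, ∀ t ∈ Set.Ico (τ l.castSucc) (τ l.succ),
      Δr t = r t - r (τ l.castSucc))
    (hΔlow : ∀ t, t < τ 0 → Δr t = 0)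
    (hΔhigh : ∀ t, τ (Fin.last M) ≤ t → Δr t = 0) :
    |∫ s in Set.Ici (0 : ℝ), g s * Δr (τ (Fin.last M) - s)| ≤
      (∫ s in Set.Ici (0 : ℝ), |g s|) *
        (⨆ l : Fin M, (τ l.succ - τ l.castSucc)) * L := by
  classical
  set T := τ (Fin.last M) with hT
  set h := ⨆ l : Fin M, (τ l.succ - τ l.castSucc) with hh
  have hLnn : 0 ≤ L := by
    have h0 : τ 0 ∈ Set.Icc (τ 0) T := ⟨le_refl _, hτ.monotone (Fin.zero_le _)⟩
    exact (abs_nonneg _).trans (hL _ h0)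
  have hbdd : BddAbove (Set.range fun l : Fin M => τ l.succ - τ l.castSucc) :=
    Set.Finite.bddAbove (Set.finite_range _)
  have hgap : ∀ l : Fin M, τ l.succ - τ l.castSucc ≤ h := fun l => le_ciSup hbdd l
  have hhpos : 0 < h := by
    have l0 : Fin M := ⟨0, hM⟩
    have : 0 < τ l0.succ - τ l0.castSucc := sub_pos.mpr (hτ (Fin.castSucc_lt_succ : l0.castSucc < l0.succ))
    exact lt_of_lt_of_le this (hgap l0)
  have key : ∀ t, |Δr t| ≤ h * L := by
    intro t
    by_cases h1 : t < τ 0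
    · rw [hΔlow t h1]; simpa using mul_nonneg hhpos.le hLnn
    by_cases h2 : T ≤ t
    · rw [hΔhigh t h2]; simpa using mul_nonneg hhpos.le hLnn
    push_neg at h1 h2
    obtain ⟨l, hl⟩ : ∃ l : Fin M, t ∈ Set.Ico (τ l.castSucc) (τ l.succ) := by
      set S := Finset.univ.filter (fun i : Fin (M + 1) => τ i ≤ t) with hS
      have h0S : (0 : Fin (M + 1)) ∈ S := by simp [hS, h1]
      have hSne : S.Nonempty := ⟨0, h0S⟩
      set i := S.max' hSne with hi
      have hiS : i ∈ S := S.max'_mem hSne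
      have hτi : τ i ≤ t := by simpa [hS] using hiS
      have hine : i ≠ Fin.last M := by
        intro he; rw [he] at hτi; exact absurd hτi (not_le.mpr h2)
      refine ⟨i.castPred hine, ?_, ?_⟩
      · simpa [Fin.castSucc_castPred] using hτi
      · by_contra hc
        push_neg at hc
        have hmem : (i.castPred hine).succ ∈ S := by simp [hS, hc]
        have hle := S.le_max' _ hmem
        have hlt : i < (i.castPred hine).succ := by
          have := (Fin.castSucc_lt_succ : (i.castPred hine).castSucc < (i.castPred hine).succ)
          rwa [Fin.castSucc_castPred] at this
        rw [← hi] at hle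
        exact absurd hle (not_le.mpr hlt)
    have hsub1 : τ l.castSucc ∈ Set.Icc (τ 0) T :=
      ⟨hτ.monotone (Fin.zero_le _), hτ.monotone (Fin.le_last _)⟩
    have htI : t ∈ Set.Icc (τ 0) T := ⟨h1, h2.le⟩
    have hmvt := (convex_Icc (τ 0) T).norm_image_sub_le_of_norm_hasDerivWithin_le
      (f := r) (f' := r') (C := L)
      (fun x hx => (hderiv x hx).hasDerivWithinAt)
      (fun x hx => by simpa [Real.norm_eq_abs] using hL x hx) hsub1 htI
    rw [hΔ l t hl]
    calc |r t - r (τ l.castSucc)| ≤ L * |t - τ l.castSucc| := by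
          simpa [Real.norm_eq_abs] using hmvt
      _ ≤ L * (τ l.succ - τ l.castSucc) := by
          apply mul_le_mul_of_nonneg_left _ hLnn
          rw [abs_of_nonneg (sub_nonneg.mpr hl.1)]
          linarith [hl.2]
      _ ≤ L * h := mul_le_mul_of_nonneg_left (hgap l) hLnn
      _ = h * L := mul_comm _ _
  have hbound : Integrable (fun s => |g s| * (h * L))
      (volume.restrict (Set.Ici (0 : ℝ))) := Integrable.mul_const (f := fun s => |g s|) hg.abs (h * L)
  calc |∫ s in Set.Ici (0 : ℝ), g s * Δr (T - s)|
      ≤ ∫ s in Set.Ici (0 : ℝ), |g s| * (h * L) := by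
        rw [show |∫ s in Set.Ici (0 : ℝ), g s * Δr (T - s)| = ‖∫ s in Set.Ici (0 : ℝ), g s * Δr (T - s)‖ from (Real.norm_eq_abs _).symm]
        refine norm_integral_le_of_norm_le hbound ?_
        filter_upwards with s
        rw [Real.norm_eq_abs, abs_mul]
        exact mul_le_mul_of_nonneg_left (key _) (abs_nonneg _)
    _ = (∫ s in Set.Ici (0 : ℝ), |g s|) * (h * L) := by
        rw [integral_mul_const]
    _ = (∫ s in Set.Ici (0 : ℝ), |g s|) * h * L := by ring
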